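/- Define the ν-order (s,t)-Ward numbers W(n,k) by W(n,k) = (k+s)·W(n-1,k) + (νn + k + s + t − 1 − ν)·W(n-1,k-1) + δ_{k0}δ_{n0}, with W(n,k)=0 for n<0 or k<0, and let E(n,k) be the (ν+1)-order (s,t)-Eulerian numbers defined by E(n,k) = (k+s)·E(n-1,k) + ((ν+1)n − k + t − ν)·E(n-1,k-1) + δ_{k0}δ_{n0}. Then W(n,k) = ∑_{j=0}^{k} E(n,j)·C(n-j, n-k) and E(n,k) = ∑_{j=0}^{k} (−1)^{k-j}·W(n,j)·C(n-j, n-k) for all n, k ≥ 0. -/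

import Mathlib

noncomputable def bb (m : ℕ) (r : ℤ) : ℚ := if 0 ≤ r then (m.choose r.toNat : ℚ) else 0

lemma bb_neg {m : ℕ} {r : ℤ} (h : r < 0) : bb m r = 0 := if_neg (by omega)

lemma bb_nat (m R : ℕ) : bb m (R : ℤ) = (m.choose R : ℚ) := by simp [bb]

lemma bb_pascal (m : ℕ) (r : ℤ) : bb (m+1) r = bb m r + bb m (r-1) := by
  rcases lt_or_ge r 0 with h | h
  · rw [bb_neg h, bb_neg h, bb_neg (by omega)]; ring
  · obtain ⟨R, rfl⟩ := Int.eq_ofNat_of_zero_le h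
    cases R with
    | zero => simp [bb]
    | succ R =>
      have h1 : ((R+1 : ℕ) : ℤ) - 1 = (R : ℤ) := by push_cast; ring
      rw [h1, bb_nat, bb_nat, bb_nat, Nat.choose_succ_succ]
      push_cast; ring

lemma bb_absorb (m : ℕ) (r : ℤ) :
    (r : ℚ) * bb m r = ((m : ℚ) - (r : ℚ) + 1) * bb m (r-1) := by
  rcases lt_or_ge r 1 with h | h
  · rcases lt_or_ge r 0 with h0 | h0
    · rw [bb_neg h0, bb_neg (by omega)]; ring
    · have : r = 0 := by omega
      subst this
      have h2 : (0:ℤ) - 1 = -1 := by ring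
      rw [h2, bb_neg (by norm_num : (-1:ℤ) < 0)]; push_cast; ring
  · obtain ⟨R, rfl⟩ := Int.eq_ofNat_of_zero_le (by omega : (0:ℤ) ≤ r)
    obtain ⟨R', rfl⟩ : ∃ R', R = R' + 1 := ⟨R - 1, by omega⟩
    have h1 : ((R'+1 : ℕ) : ℤ) - 1 = (R' : ℤ) := by push_cast; ring
    rw [h1, bb_nat, bb_nat]
    rcases le_or_gt (R'+1) m with hm | hm
    · have hkey := congrArg (fun x : ℕ => (x : ℚ)) (Nat.choose_succ_right_eq m R')
      push_cast at hkey
      have hc : ((m - R' : ℕ) : ℚ) = (m : ℚ) - R' := by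
        have : R' ≤ m := by omega
        push_cast [this]; ring
      rw [hc] at hkey
      push_cast
      linear_combination hkey
    · rw [Nat.choose_eq_zero_of_lt hm]
      rcases eq_or_lt_of_le (Nat.lt_succ_iff.mp hm) with he | hl
      · subst he; push_cast; ring
      · rw [Nat.choose_eq_zero_of_lt hl]; push_cast; ring

lemma vanish (F : ℕ → ℕ → ℚ) (h0 : ∀ k, F 0 (k+1) = 0)
    (a c : ℕ → ℕ → ℚ)
    (hrec : ∀ n k, F (n+1) (k+1) = a n k * F n (k+1) + c n k * F n k) :
    ∀ n k, n < k → F n k = 0 := by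
  intro n
  induction n with
  | zero =>
    intro k hk
    obtain ⟨k', rfl⟩ : ∃ k', k = k'+1 := ⟨k-1, by omega⟩
    exact h0 k'
  | succ n ih =>
    intro k hk
    obtain ⟨k', rfl⟩ : ∃ k', k = k'+1 := ⟨k-1, by omega⟩
    rw [hrec, ih _ (by omega), ih _ (by omega)]; ring

lemma lemA (ν : ℕ) (s t : ℚ) (W E : ℕ → ℕ → ℚ)
    (hW00 : W 0 0 = 1) (hW0k : ∀ k, W 0 (k + 1) = 0)
    (hWn0 : ∀ n, W (n + 1) 0 = (0 + s) * W n 0)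
    (hWrec : ∀ n k : ℕ, W (n + 1) (k + 1) =
      (((k : ℚ) + 1) + s) * W n (k + 1) +
      ((ν : ℚ) * ((n : ℚ) + 1) + ((k : ℚ) + 1) + s + t - 1 - (ν : ℚ)) * W n k)
    (hE00 : E 0 0 = 1) (hE0k : ∀ k, E 0 (k + 1) = 0)
    (hEn0 : ∀ n, E (n + 1) 0 = (0 + s) * E n 0)
    (hErec : ∀ n k : ℕ, E (n + 1) (k + 1) =
      (((k : ℚ) + 1) + s) * E n (k + 1) +
      (((ν : ℚ) + 1) * ((n : ℚ) + 1) - ((k : ℚ) + 1) + t - (ν : ℚ)) * E n k) :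
    ∀ n k, W n k = ∑ j ∈ Finset.range (n+1), E n j * bb (n - j) ((k : ℤ) - (j : ℤ)) := by
  have hEvan : ∀ n k, n < k → E n k = 0 := vanish E hE0k _ _ hErec
  intro n
  induction n with
  | zero =>
    intro k
    rw [Finset.sum_range_one]
    cases k with
    | zero => rw [hW00, hE00]; norm_num [bb]
    | succ k =>
      rw [hW0k, hE00]
      have h1 : ((k+1 : ℕ) : ℤ) - ((0:ℕ) : ℤ) = ((k+1 : ℕ) : ℤ) := by push_cast; ring
      rw [h1, bb_nat, Nat.choose_eq_zero_of_lt (by omega)]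
      norm_num
  | succ n ih =>
    intro k
    cases k with
    | zero =>
      rw [hWn0, ih 0]
      have hL : ∑ j ∈ Finset.range (n+1), E n j * bb (n - j) (((0:ℕ) : ℤ) - (j : ℤ))
          = E n 0 * bb (n - 0) (((0:ℕ) : ℤ) - ((0:ℕ) : ℤ)) := by
        apply Finset.sum_eq_single_of_mem 0 (Finset.mem_range.mpr (by omega))
        intro j _ hj
        rw [bb_neg (by omega : ((0:ℕ) : ℤ) - (j : ℤ) < 0), mul_zero]
      have hR : ∑ j ∈ Finset.range (n+1+1), E (n+1) j * bb (n+1 - j) (((0:ℕ) : ℤ) - (j : ℤ))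
          = E (n+1) 0 * bb (n+1 - 0) (((0:ℕ) : ℤ) - ((0:ℕ) : ℤ)) := by
        apply Finset.sum_eq_single_of_mem 0 (Finset.mem_range.mpr (by omega))
        intro j _ hj
        rw [bb_neg (by omega : ((0:ℕ) : ℤ) - (j : ℤ) < 0), mul_zero]
      rw [hL, hR, hEn0]
      have h0 : ((0:ℕ) : ℤ) - ((0:ℕ) : ℤ) = ((0 : ℕ) : ℤ) := by norm_num
      rw [h0, bb_nat, bb_nat]
      norm_num
    | succ k =>
      have e1 : W n (k+1) = ∑ j ∈ Finset.range (n+1),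
          E n j * bb (n - j) ((k : ℤ) + 1 - (j : ℤ)) := by
        rw [ih (k+1)]
        apply Finset.sum_congr rfl
        intro j _
        have h1 : ((k+1 : ℕ) : ℤ) - (j : ℤ) = (k : ℤ) + 1 - (j : ℤ) := by push_cast; ring
        rw [h1]
      have e0 : W n k = ∑ j ∈ Finset.range (n+1),
          E n j * bb (n - j) ((k : ℤ) - (j : ℤ)) := ih k
      rw [hWrec, e1, e0, Finset.mul_sum, Finset.mul_sum, ← Finset.sum_add_distrib]
      have hT : ∑ j ∈ Finset.range (n+1+1), E (n+1) j * bb (n+1 - j) (((k+1 : ℕ) : ℤ) - (j : ℤ))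
          = ∑ j ∈ Finset.range (n+1),
              (((j : ℚ) + s) * (E n j * (bb (n - j) ((k : ℤ) + 1 - (j : ℤ)) + bb (n - j) ((k : ℤ) - (j : ℤ))))
               + ((ν : ℚ) * (n : ℚ) + (n : ℚ) - (j : ℚ) + t) * (E n j * bb (n - j) ((k : ℤ) - (j : ℤ)))) := by
        rw [Finset.sum_range_succ']
        have step1 : ∀ j ∈ Finset.range (n+1),
            E (n+1) (j+1) * bb (n+1 - (j+1)) (((k+1 : ℕ) : ℤ) - ((j+1 : ℕ) : ℤ))
            = ((j : ℚ) + 1 + s) * (E n (j+1) * bb (n - j) ((k : ℤ) - (j : ℤ)))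
              + ((ν : ℚ) * (n : ℚ) + (n : ℚ) - (j : ℚ) + t) * (E n j * bb (n - j) ((k : ℤ) - (j : ℤ))) := by
          intro j hj
          have hm : n + 1 - (j + 1) = n - j := by omega
          have hr : ((k+1 : ℕ) : ℤ) - ((j+1 : ℕ) : ℤ) = (k : ℤ) - (j : ℤ) := by push_cast; ring
          rw [hm, hr, hErec]
          push_cast
          ring
        rw [Finset.sum_congr rfl step1, Finset.sum_add_distrib]
        have hshift : (∑ j ∈ Finset.range (n+1),
              ((j : ℚ) + 1 + s) * (E n (j+1) * bb (n - j) ((k : ℤ) - (j : ℤ))))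
            + E (n+1) 0 * bb (n+1 - 0) (((k+1 : ℕ) : ℤ) - ((0:ℕ) : ℤ))
            = ∑ j ∈ Finset.range (n+1),
              ((j : ℚ) + s) * (E n j * (bb (n - j) ((k : ℤ) + 1 - (j : ℤ)) + bb (n - j) ((k : ℤ) - (j : ℤ)))) := by
          have hbig : (∑ j ∈ Finset.range (n+1),
                ((j : ℚ) + 1 + s) * (E n (j+1) * bb (n - j) ((k : ℤ) - (j : ℤ))))
              + E (n+1) 0 * bb (n+1 - 0) (((k+1 : ℕ) : ℤ) - ((0:ℕ) : ℤ))
              = ∑ j ∈ Finset.range (n+1+1),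
                ((j : ℚ) + s) * (E n j * bb (n+1 - j) ((k : ℤ) + 1 - (j : ℤ))) := by
            conv_rhs => rw [Finset.sum_range_succ']
            congr 1
            · apply Finset.sum_congr rfl
              intro j hj
              have hm : n + 1 - (j + 1) = n - j := by omega
              have hr : (k : ℤ) + 1 - ((j+1 : ℕ) : ℤ) = (k : ℤ) - (j : ℤ) := by push_cast; ring
              rw [hm, hr]
              push_cast
              ring
            · rw [hEn0]
              have hr : ((k+1 : ℕ) : ℤ) - ((0:ℕ) : ℤ) = (k : ℤ) + 1 - ((0:ℕ) : ℤ) := by push_cast; ring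
              rw [hr]
              push_cast
              ring
          rw [hbig, Finset.sum_range_succ, hEvan n (n+1) (by omega), zero_mul, mul_zero, add_zero]
          apply Finset.sum_congr rfl
          intro j hj
          have hj' : j ≤ n := by simpa [Nat.lt_succ_iff] using hj
          have hm : n + 1 - j = (n - j) + 1 := by omega
          rw [hm, bb_pascal]
          have hr : (k : ℤ) + 1 - (j : ℤ) - 1 = (k : ℤ) - (j : ℤ) := by ring
          rw [hr]
        conv_rhs => rw [Finset.sum_add_distrib]
        linear_combination hshift
      rw [hT]
      apply Finset.sum_congr rfl
      intro j hj
      have hj' : j ≤ n := by simpa [Nat.lt_succ_iff] using hj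
      have habs := bb_absorb (n - j) ((k : ℤ) + 1 - (j : ℤ))
      have hr : (k : ℤ) + 1 - (j : ℤ) - 1 = (k : ℤ) - (j : ℤ) := by ring
      rw [hr, Nat.cast_sub hj'] at habs
      push_cast at habs
      linear_combination (E n j) * habs

lemma lemB (ν : ℕ) (s t : ℚ) (W E : ℕ → ℕ → ℚ)
    (hW00 : W 0 0 = 1) (hW0k : ∀ k, W 0 (k + 1) = 0)
    (hWn0 : ∀ n, W (n + 1) 0 = (0 + s) * W n 0)
    (hWrec : ∀ n k : ℕ, W (n + 1) (k + 1) =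
      (((k : ℚ) + 1) + s) * W n (k + 1) +
      ((ν : ℚ) * ((n : ℚ) + 1) + ((k : ℚ) + 1) + s + t - 1 - (ν : ℚ)) * W n k)
    (hE00 : E 0 0 = 1) (hE0k : ∀ k, E 0 (k + 1) = 0)
    (hEn0 : ∀ n, E (n + 1) 0 = (0 + s) * E n 0)
    (hErec : ∀ n k : ℕ, E (n + 1) (k + 1) =
      (((k : ℚ) + 1) + s) * E n (k + 1) +
      (((ν : ℚ) + 1) * ((n : ℚ) + 1) - ((k : ℚ) + 1) + t - (ν : ℚ)) * E n k) :
    ∀ n k, E n k = ∑ j ∈ Finset.range (n+1),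
      (-1 : ℚ)^(k+j) * (W n j * bb (n - j) ((k : ℤ) - (j : ℤ))) := by
  have hWvan : ∀ n k, n < k → W n k = 0 := vanish W hW0k _ _ hWrec
  intro n
  induction n with
  | zero =>
    intro k
    rw [Finset.sum_range_one]
    cases k with
    | zero => rw [hE00, hW00]; norm_num [bb]
    | succ k =>
      rw [hE0k, hW00]
      have h1 : ((k+1 : ℕ) : ℤ) - ((0:ℕ) : ℤ) = ((k+1 : ℕ) : ℤ) := by push_cast; ring
      rw [h1, bb_nat, Nat.choose_eq_zero_of_lt (by omega)]
      norm_num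
  | succ n ih =>
    intro k
    cases k with
    | zero =>
      rw [hEn0, ih 0]
      have hL : ∑ j ∈ Finset.range (n+1), (-1 : ℚ)^(0+j) * (W n j * bb (n - j) (((0:ℕ) : ℤ) - (j : ℤ)))
          = (-1 : ℚ)^(0+0) * (W n 0 * bb (n - 0) (((0:ℕ) : ℤ) - ((0:ℕ) : ℤ))) := by
        apply Finset.sum_eq_single_of_mem 0 (Finset.mem_range.mpr (by omega))
        intro j _ hj
        rw [bb_neg (by omega : ((0:ℕ) : ℤ) - (j : ℤ) < 0), mul_zero, mul_zero]
      have hR : ∑ j ∈ Finset.range (n+1+1), (-1 : ℚ)^(0+j) * (W (n+1) j * bb (n+1 - j) (((0:ℕ) : ℤ) - (j : ℤ)))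
          = (-1 : ℚ)^(0+0) * (W (n+1) 0 * bb (n+1 - 0) (((0:ℕ) : ℤ) - ((0:ℕ) : ℤ))) := by
        apply Finset.sum_eq_single_of_mem 0 (Finset.mem_range.mpr (by omega))
        intro j _ hj
        rw [bb_neg (by omega : ((0:ℕ) : ℤ) - (j : ℤ) < 0), mul_zero, mul_zero]
      rw [hL, hR, hWn0]
      have h0 : ((0:ℕ) : ℤ) - ((0:ℕ) : ℤ) = ((0 : ℕ) : ℤ) := by norm_num
      rw [h0, bb_nat, bb_nat]
      norm_num
    | succ k =>
      have e1 : E n (k+1) = ∑ j ∈ Finset.range (n+1),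
          (-1 : ℚ)^(k+1+j) * (W n j * bb (n - j) ((k : ℤ) + 1 - (j : ℤ))) := by
        rw [ih (k+1)]
        apply Finset.sum_congr rfl
        intro j _
        have h1 : ((k+1 : ℕ) : ℤ) - (j : ℤ) = (k : ℤ) + 1 - (j : ℤ) := by push_cast; ring
        rw [h1]
      have e0 : E n k = ∑ j ∈ Finset.range (n+1),
          (-1 : ℚ)^(k+j) * (W n j * bb (n - j) ((k : ℤ) - (j : ℤ))) := ih k
      rw [hErec, e1, e0, Finset.mul_sum, Finset.mul_sum, ← Finset.sum_add_distrib]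
      have hT : ∑ j ∈ Finset.range (n+1+1),
            (-1 : ℚ)^(k+1+j) * (W (n+1) j * bb (n+1 - j) (((k+1 : ℕ) : ℤ) - (j : ℤ)))
          = ∑ j ∈ Finset.range (n+1),
              (-(((j : ℚ) + s) * ((-1 : ℚ)^(k+j) * (W n j * (bb (n - j) ((k : ℤ) + 1 - (j : ℤ)) + bb (n - j) ((k : ℤ) - (j : ℤ))))))
               + ((ν : ℚ) * (n : ℚ) + (j : ℚ) + s + t) * ((-1 : ℚ)^(k+j) * (W n j * bb (n - j) ((k : ℤ) - (j : ℤ))))) := by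
        rw [Finset.sum_range_succ']
        have step1 : ∀ j ∈ Finset.range (n+1),
            (-1 : ℚ)^(k+1+(j+1)) * (W (n+1) (j+1) * bb (n+1 - (j+1)) (((k+1 : ℕ) : ℤ) - ((j+1 : ℕ) : ℤ)))
            = ((j : ℚ) + 1 + s) * ((-1 : ℚ)^(k+j) * (W n (j+1) * bb (n - j) ((k : ℤ) - (j : ℤ))))
              + ((ν : ℚ) * (n : ℚ) + (j : ℚ) + s + t) * ((-1 : ℚ)^(k+j) * (W n j * bb (n - j) ((k : ℤ) - (j : ℤ)))) := by
          intro j hj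
          have hm : n + 1 - (j + 1) = n - j := by omega
          have hr : ((k+1 : ℕ) : ℤ) - ((j+1 : ℕ) : ℤ) = (k : ℤ) - (j : ℤ) := by push_cast; ring
          rw [hm, hr, hWrec]
          push_cast
          ring
        rw [Finset.sum_congr rfl step1, Finset.sum_add_distrib]
        have hshift : (∑ j ∈ Finset.range (n+1),
              ((j : ℚ) + 1 + s) * ((-1 : ℚ)^(k+j) * (W n (j+1) * bb (n - j) ((k : ℤ) - (j : ℤ)))))
            + (-1 : ℚ)^(k+1+0) * (W (n+1) 0 * bb (n+1 - 0) (((k+1 : ℕ) : ℤ) - ((0:ℕ) : ℤ)))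
            = ∑ j ∈ Finset.range (n+1),
              (-(((j : ℚ) + s) * ((-1 : ℚ)^(k+j) * (W n j * (bb (n - j) ((k : ℤ) + 1 - (j : ℤ)) + bb (n - j) ((k : ℤ) - (j : ℤ))))))) := by
          have hbig : (∑ j ∈ Finset.range (n+1),
                ((j : ℚ) + 1 + s) * ((-1 : ℚ)^(k+j) * (W n (j+1) * bb (n - j) ((k : ℤ) - (j : ℤ)))))
              + (-1 : ℚ)^(k+1+0) * (W (n+1) 0 * bb (n+1 - 0) (((k+1 : ℕ) : ℤ) - ((0:ℕ) : ℤ)))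
              = ∑ j ∈ Finset.range (n+1+1),
                (-1 : ℚ)^(k+1+j) * (((j : ℚ) + s) * (W n j * bb (n+1 - j) ((k : ℤ) + 1 - (j : ℤ)))) := by
            conv_rhs => rw [Finset.sum_range_succ']
            congr 1
            · apply Finset.sum_congr rfl
              intro j hj
              have hm : n + 1 - (j + 1) = n - j := by omega
              have hr : (k : ℤ) + 1 - ((j+1 : ℕ) : ℤ) = (k : ℤ) - (j : ℤ) := by push_cast; ring
              rw [hm, hr]
              push_cast
              ring
            · rw [hWn0]
              have hr : ((k+1 : ℕ) : ℤ) - ((0:ℕ) : ℤ) = (k : ℤ) + 1 - ((0:ℕ) : ℤ) := by push_cast; ring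
              rw [hr]
              push_cast
              ring
          rw [hbig, Finset.sum_range_succ, hWvan n (n+1) (by omega)]
          simp only [zero_mul, mul_zero, add_zero]
          apply Finset.sum_congr rfl
          intro j hj
          have hj' : j ≤ n := by simpa [Nat.lt_succ_iff] using hj
          have hm : n + 1 - j = (n - j) + 1 := by omega
          rw [hm, bb_pascal]
          have hr : (k : ℤ) + 1 - (j : ℤ) - 1 = (k : ℤ) - (j : ℤ) := by ring
          rw [hr]
          ring
        conv_rhs => rw [Finset.sum_add_distrib]
        linear_combination hshift
      rw [hT]
      apply Finset.sum_congr rfl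
      intro j hj
      have hj' : j ≤ n := by simpa [Nat.lt_succ_iff] using hj
      have habs := bb_absorb (n - j) ((k : ℤ) + 1 - (j : ℤ))
      have hr : (k : ℤ) + 1 - (j : ℤ) - 1 = (k : ℤ) - (j : ℤ) := by ring
      rw [hr, Nat.cast_sub hj'] at habs
      push_cast at habs
      linear_combination (-(-1 : ℚ)^(k+j) * W n j) * habs

/-- The ν-order `(s,t)`-Ward numbers `W`, defined by
`W(n,k) = (k+s)W(n-1,k) + (νn+k+s+t-1-ν)W(n-1,k-1) + δ_{k0}δ_{n0}`, and the
`(ν+1)`-order `(s,t)`-Eulerian numbers `E`, defined by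
`E(n,k) = (k+s)E(n-1,k) + ((ν+1)n-k+t-ν)E(n-1,k-1) + δ_{k0}δ_{n0}` (both
vanishing for negative indices), form an inverse pair:
`W(n,k) = ∑_j E(n,j) C(n-j,n-k)` and `E(n,k) = ∑_j (-1)^{k-j} W(n,j) C(n-j,n-k)`,
where `C(n-j, n-k)` is understood to vanish when `n - k < 0`. -/
theorem stmt13 (ν : ℕ) (hν : 1 ≤ ν) (s t : ℚ) (W E : ℕ → ℕ → ℚ)
    (hW00 : W 0 0 = 1) (hW0k : ∀ k, W 0 (k + 1) = 0)
    (hWn0 : ∀ n, W (n + 1) 0 = (0 + s) * W n 0)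
    (hWrec : ∀ n k : ℕ, W (n + 1) (k + 1) =
      (((k : ℚ) + 1) + s) * W n (k + 1) +
      ((ν : ℚ) * ((n : ℚ) + 1) + ((k : ℚ) + 1) + s + t - 1 - (ν : ℚ)) * W n k)
    (hE00 : E 0 0 = 1) (hE0k : ∀ k, E 0 (k + 1) = 0)
    (hEn0 : ∀ n, E (n + 1) 0 = (0 + s) * E n 0)
    (hErec : ∀ n k : ℕ, E (n + 1) (k + 1) =
      (((k : ℚ) + 1) + s) * E n (k + 1) +
      (((ν : ℚ) + 1) * ((n : ℚ) + 1) - ((k : ℚ) + 1) + t - (ν : ℚ)) * E n k)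
    (n k : ℕ) :
    W n k = (∑ j ∈ Finset.range (k + 1),
        E n j * (if n < k then 0 else ((n - j).choose (n - k) : ℚ)))
    ∧ E n k = (∑ j ∈ Finset.range (k + 1),
        (-1 : ℚ) ^ (k - j) * W n j * (if n < k then 0 else ((n - j).choose (n - k) : ℚ))) := by
  have hWvan : ∀ n k, n < k → W n k = 0 := vanish W hW0k _ _ hWrec
  have hEvan : ∀ n k, n < k → E n k = 0 := vanish E hE0k _ _ hErec
  have hA := lemA ν s t W E hW00 hW0k hWn0 hWrec hE00 hE0k hEn0 hErec n k
  have hB := lemB ν s t W E hW00 hW0k hWn0 hWrec hE00 hE0k hEn0 hErec n k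
  have hchoose : ∀ j, j ≤ k → k ≤ n → bb (n - j) ((k : ℤ) - (j : ℤ)) = ((n - j).choose (n - k) : ℚ) := by
    intro j hjk hkn
    have h1 : (k : ℤ) - (j : ℤ) = ((k - j : ℕ) : ℤ) := by omega
    rw [h1, bb_nat]
    have h2 : k - j = (n - j) - (n - k) := by omega
    rw [h2, Nat.choose_symm (by omega : n - k ≤ n - j)]
  constructor
  · rcases lt_or_ge n k with h | h
    · rw [hWvan n k h]
      simp [if_pos h]
    · rw [hA]
      simp only [if_neg (not_lt.mpr h)]
      have hsub : ∑ j ∈ Finset.range (k+1), E n j * bb (n - j) ((k : ℤ) - (j : ℤ))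
          = ∑ j ∈ Finset.range (n+1), E n j * bb (n - j) ((k : ℤ) - (j : ℤ)) := by
        apply Finset.sum_subset (Finset.range_subset_range.mpr (by omega))
        intro j hj hj'
        have hkj : k < j := by simpa [Nat.lt_succ_iff] using hj'
        rw [bb_neg (by omega : (k : ℤ) - (j : ℤ) < 0), mul_zero]
      rw [← hsub]
      apply Finset.sum_congr rfl
      intro j hj
      have hjk : j ≤ k := by simpa [Nat.lt_succ_iff] using hj
      rw [hchoose j hjk h]
  · rcases lt_or_ge n k with h | h
    · rw [hEvan n k h]
      simp [if_pos h]
    · rw [hB]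
      simp only [if_neg (not_lt.mpr h)]
      have hsub : ∑ j ∈ Finset.range (k+1), (-1 : ℚ)^(k+j) * (W n j * bb (n - j) ((k : ℤ) - (j : ℤ)))
          = ∑ j ∈ Finset.range (n+1), (-1 : ℚ)^(k+j) * (W n j * bb (n - j) ((k : ℤ) - (j : ℤ))) := by
        apply Finset.sum_subset (Finset.range_subset_range.mpr (by omega))
        intro j hj hj'
        have hkj : k < j := by simpa [Nat.lt_succ_iff] using hj'
        rw [bb_neg (by omega : (k : ℤ) - (j : ℤ) < 0), mul_zero, mul_zero]
      rw [← hsub]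
      apply Finset.sum_congr rfl
      intro j hj
      have hjk : j ≤ k := by simpa [Nat.lt_succ_iff] using hj
      rw [hchoose j hjk h]
      have hs : (-1 : ℚ)^(k+j) = (-1 : ℚ)^(k-j) := by
        have h2 : k + j = (k - j) + 2 * j := by omega
        rw [h2, pow_add, pow_mul]
        norm_num
      rw [hs]
      ring
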